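/- Let G be a finite abelian group of order n with n ≡ 2 (mod 4). Then the set of monomials occurring with nonzero coefficient in imm_{(n−1,1)}(M_G) equals the set of monomials occurring with nonzero coefficient in per(M_G), and the set of monomials occurring with nonzero coefficient in imm_{(2,1^{n−2})}(M_G) equals the set of monomials occurring with nonzero coefficient in det(M_G). -/

import Mathlib

open MvPolynomial

namespace Stmt12Aux
open Finset
set_option linter.unusedSectionVars false
variable {G : Type*} [AddCommGroup G] [Fintype G] [DecidableEq G]

def VF (G : Type*) [AddCommGroup G] [Fintype G] [DecidableEq G] : Finset G :=
  univ.filter (fun g => ∃ x : G, x + x = g)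

lemma mem_VF {g : G} : g ∈ VF G ↔ ∃ x : G, x + x = g := by simp [VF]
lemma dbl_mem_VF (x : G) : x + x ∈ VF G := mem_VF.2 ⟨x, rfl⟩
lemma VF_add {g₁ g₂ : G} (h1 : g₁ ∈ VF G) (h2 : g₂ ∈ VF G) : g₁ + g₂ ∈ VF G := by
  obtain ⟨x, rfl⟩ := mem_VF.1 h1; obtain ⟨y, rfl⟩ := mem_VF.1 h2
  exact mem_VF.2 ⟨x + y, by abel⟩
lemma VF_neg {g : G} (h : g ∈ VF G) : -g ∈ VF G := by
  obtain ⟨x, rfl⟩ := mem_VF.1 h; exact mem_VF.2 ⟨-x, by abel⟩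
lemma VF_sub {g₁ g₂ : G} (h1 : g₁ + g₂ ∈ VF G) (h2 : g₂ ∈ VF G) : g₁ ∈ VF G := by
  have := VF_add h1 (VF_neg h2); simpa using this

def K2 (G : Type*) [AddCommGroup G] : AddSubgroup G where
  carrier := {x | x + x = 0}
  zero_mem' := by simp
  add_mem' := by
    intro a b ha hb
    simp only [Set.mem_setOf_eq] at *
    calc a + b + (a + b) = (a + a) + (b + b) := by abel
    _ = 0 := by rw [ha, hb, add_zero]
  neg_mem' := by
    intro a ha
    simp only [Set.mem_setOf_eq] at *
    calc -a + -a = -(a + a) := by abel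
    _ = 0 := by rw [ha, neg_zero]

lemma mem_K2 {x : G} : x ∈ K2 G ↔ x + x = 0 := Iff.rfl

lemma card_K2 (hmod : Fintype.card G % 4 = 2) : Nat.card (K2 G) = 2 := by
  haveI : Fintype (K2 G) := Fintype.ofFinite _
  haveI : Fact (Nat.Prime 2) := ⟨Nat.prime_two⟩
  have hdvd2 : (2 : ℕ) ∣ Fintype.card G := by omega
  obtain ⟨x₀, hx₀⟩ := exists_prime_addOrderOf_dvd_card 2 hdvd2
  have hx₀0 : x₀ + x₀ = 0 := by
    have := addOrderOf_nsmul_eq_zero x₀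
    rw [hx₀, two_nsmul] at this; exact this
  have hx₀ne : x₀ ≠ 0 := by
    intro h; rw [h, addOrderOf_zero] at hx₀; omega
  -- card ≥ 2
  have hlt : 1 < Fintype.card (K2 G) := by
    rw [Fintype.one_lt_card_iff]
    exact ⟨⟨x₀, hx₀0⟩, ⟨0, (K2 G).zero_mem⟩, by simpa [Subtype.ext_iff] using hx₀ne⟩
  -- unique prime divisor
  have huniq : ∀ q : ℕ, q.Prime → q ∣ Fintype.card (K2 G) → q = 2 := by
    intro q hq hdvd
    haveI : Fact (Nat.Prime q) := ⟨hq⟩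
    obtain ⟨y, hy⟩ := exists_prime_addOrderOf_dvd_card q hdvd
    have hyy : y + y = 0 := by
      ext
      exact y.2
    have : addOrderOf y ∣ 2 := addOrderOf_dvd_of_nsmul_eq_zero (by rw [two_nsmul]; exact hyy)
    rw [hy] at this
    exact (Nat.prime_dvd_prime_iff_eq hq Nat.prime_two).1 this
  have hpow := Nat.eq_prime_pow_of_unique_prime_dvd (n := Fintype.card (K2 G))
      (by omega) (fun {q} hq hd => huniq q hq hd)
  set k := (Fintype.card (K2 G)).primeFactorsList.length with hk
  have hdvdG : Fintype.card (K2 G) ∣ Fintype.card G := by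
    have := AddSubgroup.card_addSubgroup_dvd_card (K2 G)
    simpa [Nat.card_eq_fintype_card] using this
  have hk1 : k ≤ 1 := by
    by_contra hk2
    have h4 : (4 : ℕ) ∣ 2 ^ k := by
      have : (2:ℕ)^2 ∣ 2 ^ k := pow_dvd_pow 2 (by omega)
      simpa using this
    have : (4:ℕ) ∣ Fintype.card G := dvd_trans (hpow ▸ h4) hdvdG
    omega
  have hk0 : k ≠ 0 := by
    intro h
    rw [h, pow_zero] at hpow
    omega
  have : k = 1 := by omega
  rw [Nat.card_eq_fintype_card, hpow, this, pow_one]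

lemma card_kF (hmod : Fintype.card G % 4 = 2) :
    (univ.filter fun x : G => x + x = 0).card = 2 := by
  haveI : Fintype (K2 G) := Fintype.ofFinite _
  have h2 : Fintype.card (K2 G) = 2 := by
    rw [← Nat.card_eq_fintype_card]; exact card_K2 hmod
  calc (univ.filter fun x : G => x + x = 0).card
      = Fintype.card {x : G // x + x = 0} := (Fintype.card_subtype _).symm
    _ = Fintype.card (K2 G) := Fintype.card_congr (Equiv.subtypeEquivRight fun _ => Iff.rfl).symm
    _ = 2 := h2

lemma fiber_card (hmod : Fintype.card G % 4 = 2) (g : G) :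
    (univ.filter fun c : G => c + c = g).card = if g ∈ VF G then 2 else 0 := by
  split_ifs with hg
  · obtain ⟨x, rfl⟩ := mem_VF.1 hg
    rw [← card_kF (G := G) hmod]
    apply Finset.card_nbij' (i := fun c => c - x) (j := fun c => c + x)
    · intro c hc
      simp only [mem_coe, mem_filter, mem_univ, true_and] at hc ⊢
      rw [show c - x + (c - x) = (c + c) - (x + x) by abel, hc, sub_self]
    · intro c hc
      simp only [mem_coe, mem_filter, mem_univ, true_and] at hc ⊢
      rw [show c + x + (c + x) = (c + c) + (x + x) by abel, hc, zero_add]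
    · intro c _; simp
    · intro c _; simp
  · rw [Finset.card_eq_zero, Finset.filter_eq_empty_iff]
    intro c _
    exact fun h => hg (mem_VF.2 ⟨c, h⟩)

lemma card_VF (hmod : Fintype.card G % 4 = 2) : 2 * (VF G).card = Fintype.card G := by
  have h1 : (univ : Finset G).card =
      ∑ g : G, (univ.filter fun c : G => c + c = g).card :=
    Finset.card_eq_sum_card_fiberwise (fun x _ => mem_univ (x + x))
  rw [card_univ] at h1
  rw [h1]
  rw [Finset.sum_congr rfl fun g _ => fiber_card hmod g]
  rw [Finset.sum_ite_mem, univ_inter, Finset.sum_const, smul_eq_mul, mul_comm]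

lemma notmem_add_notmem (hmod : Fintype.card G % 4 = 2) {b c : G}
    (hb : b ∉ VF G) (hc : c ∉ VF G) : b + c ∈ VF G := by
  have hsub : (VF G).image (b + ·) ⊆ univ \ VF G := by
    intro y hy
    obtain ⟨v, hv, rfl⟩ := Finset.mem_image.1 hy
    rw [mem_sdiff]
    refine ⟨mem_univ _, fun hbv => hb (VF_sub hbv hv)⟩
  have hcard : ((VF G).image (b + ·)).card = (univ \ VF G).card := by
    rw [Finset.card_image_of_injective _ (add_right_injective b),
      Finset.card_sdiff_of_subset (subset_univ _), card_univ]
    have := card_VF (G := G) hmod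
    omega
  have heq : (VF G).image (b + ·) = univ \ VF G :=
    Finset.eq_of_subset_of_card_le hsub (le_of_eq hcard.symm)
  have hcmem : c ∈ (VF G).image (b + ·) := by
    rw [heq, mem_sdiff]; exact ⟨mem_univ _, hc⟩
  obtain ⟨v, hv, hcv⟩ := Finset.mem_image.1 hcmem
  rw [← hcv, show b + (b + v) = (b + b) + v by abel]
  exact VF_add (dbl_mem_VF b) hv

lemma mem_add_notmem {b c : G} (hb : b ∈ VF G) (hc : c ∉ VF G) : b + c ∉ VF G :=
  fun h => hc (VF_sub (g₁ := c) (g₂ := b) (by rwa [add_comm]) hb)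

lemma add_mem_VF_iff (hmod : Fintype.card G % 4 = 2) (b c : G) :
    b + c ∈ VF G ↔ ((b ∈ VF G) ↔ (c ∈ VF G)) := by
  by_cases hb : b ∈ VF G <;> by_cases hc : c ∈ VF G
  · simp [hb, hc, VF_add hb hc]
  · simp [hb, hc, mem_add_notmem hb hc]
  · have h : b + c ∉ VF G := by rw [add_comm]; exact mem_add_notmem hc hb
    simp [hb, hc, h]
  · simp [hb, hc, notmem_add_notmem hmod hb hc]

def Uc (c : G) (σ : Equiv.Perm G) : Equiv.Perm G :=
  (Equiv.addRight c).trans (σ.trans (Equiv.addRight c))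

lemma Uc_apply (c : G) (σ : Equiv.Perm G) (a : G) : Uc c σ a = σ (a + c) + c := rfl

lemma Uc_Uc (c e : G) (σ : Equiv.Perm G) : Uc c (Uc e σ) = Uc (e + c) σ := by
  ext a
  simp only [Uc_apply]
  rw [show a + c + e = a + (e + c) by abel]
  abel

lemma Uc_zero (σ : Equiv.Perm G) : Uc 0 σ = σ := by
  ext a; simp [Uc_apply]

lemma Uc_neg_Uc (c : G) (σ : Equiv.Perm G) : Uc (-c) (Uc c σ) = σ := by
  rw [Uc_Uc, add_neg_cancel, Uc_zero]

lemma Uc_Uc_neg (c : G) (σ : Equiv.Perm G) : Uc c (Uc (-c) σ) = σ := by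
  rw [Uc_Uc, neg_add_cancel, Uc_zero]

lemma sign_Uc (c : G) (σ : Equiv.Perm G) :
    Equiv.Perm.sign (Uc c σ) = Equiv.Perm.sign σ := by
  have : Uc c σ = (Equiv.addRight c) * σ * (Equiv.addRight c) := rfl
  rw [this, map_mul, map_mul]
  have h2 : Equiv.Perm.sign (Equiv.addRight c) * Equiv.Perm.sign (Equiv.addRight c) = 1 :=
    Int.units_mul_self _
  rw [mul_comm (Equiv.Perm.sign (Equiv.addRight c)) (Equiv.Perm.sign σ), mul_assoc, h2, mul_one]

noncomputable def Dm (σ : Equiv.Perm G) : G →₀ ℕ := ∑ a : G, Finsupp.single (a + σ a) 1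

lemma Dm_Uc (c : G) (σ : Equiv.Perm G) : Dm (Uc c σ) = Dm σ := by
  unfold Dm
  calc ∑ a : G, Finsupp.single (a + Uc c σ a) 1
      = ∑ a : G, Finsupp.single ((Equiv.addRight c a) + σ (Equiv.addRight c a)) 1 := by
        refine Finset.sum_congr rfl fun a _ => ?_
        rw [Uc_apply]
        congr 1
        show a + (σ (a + c) + c) = (a + c) + σ (a + c)
        abel
    _ = ∑ b : G, Finsupp.single (b + σ b) 1 :=
        Equiv.sum_comp (Equiv.addRight c) (fun b => Finsupp.single (b + σ b) 1)

lemma Dm_apply (σ : Equiv.Perm G) (g : G) :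
    Dm σ g = (univ.filter fun a => a + σ a = g).card := by
  unfold Dm
  rw [Finset.sum_apply']
  rw [Finset.card_filter]
  refine Finset.sum_congr rfl fun a _ => ?_
  rw [Finsupp.single_apply]

def fixc (σ : Equiv.Perm G) : ℕ := (univ.filter fun u => σ u = u).card

def Mcnt (σ : Equiv.Perm G) : ℕ := (univ.filter fun b => b + σ b ∈ VF G).card

lemma sum_fixc_Uc (hmod : Fintype.card G % 4 = 2) (σ : Equiv.Perm G) :
    ∑ c : G, fixc (Uc c σ) = 2 * Mcnt σ := by
  have step1 : ∀ c : G, fixc (Uc c σ) = (univ.filter fun b : G => c + c = b - σ b).card := by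
    intro c
    unfold fixc
    apply Finset.card_nbij' (i := fun a => a + c) (j := fun b => b - c)
    · intro a ha
      simp only [mem_coe, mem_filter, mem_univ, true_and] at ha ⊢
      simp only [Uc_apply] at ha ⊢
      have h2 : σ (a + c) = a - c := eq_sub_of_add_eq ha
      rw [h2]; abel
    · intro b hb
      simp only [mem_coe, mem_filter, mem_univ, true_and] at hb ⊢
      simp only [Uc_apply] at hb ⊢
      have h2 : σ (b - c + c) = σ b := by congr 1; abel
      rw [h2]
      have h3 : σ b = b - (c + c) := by rw [hb]; abel
      rw [h3]
      abel
    · intro a _; simp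
    · intro b _; simp
  rw [Finset.sum_congr rfl fun c _ => step1 c]
  have swap : ∑ c : G, (univ.filter fun b : G => c + c = b - σ b).card
      = ∑ b : G, (univ.filter fun c : G => c + c = b - σ b).card := by
    simp only [Finset.card_filter]
    exact Finset.sum_comm
  rw [swap]
  have step2 : ∀ b : G, (univ.filter fun c : G => c + c = b - σ b).card
      = if b + σ b ∈ VF G then 2 else 0 := by
    intro b
    rw [fiber_card hmod (b - σ b)]
    congr 1
    have hiff : b - σ b ∈ VF G ↔ b + σ b ∈ VF G := by
      constructor
      · intro h
        have := VF_add h (dbl_mem_VF (σ b))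
        rw [show b - σ b + (σ b + σ b) = b + σ b by abel] at this
        exact this
      · intro h
        have : (b - σ b) + (σ b + σ b) ∈ VF G := by
          rw [show b - σ b + (σ b + σ b) = b + σ b by abel]; exact h
        exact VF_sub this (dbl_mem_VF (σ b))
    simp [hiff]
  rw [Finset.sum_congr rfl fun b _ => step2 b]
  calc (∑ b : G, if b + σ b ∈ VF G then 2 else 0)
      = ∑ b : G, 2 * (if b + σ b ∈ VF G then 1 else 0) := by
        refine Finset.sum_congr rfl fun b _ => ?_
        split <;> simp
    _ = 2 * ∑ b : G, (if b + σ b ∈ VF G then 1 else 0) := by rw [Finset.mul_sum]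
    _ = 2 * Mcnt σ := by rw [Mcnt, Finset.card_filter]

lemma Mcnt_eq_sum_Dm (σ : Equiv.Perm G) : Mcnt σ = ∑ g ∈ VF G, Dm σ g := by
  unfold Mcnt
  rw [Finset.card_eq_sum_card_fiberwise
    (s := univ.filter fun b => b + σ b ∈ VF G) (f := fun b => b + σ b) (t := VF G)
      (fun b hb => by simpa using hb)]
  refine Finset.sum_congr rfl fun g hg => ?_
  rw [Dm_apply]
  congr 1
  ext b
  simp only [mem_filter, mem_univ, true_and, and_iff_right_iff_imp]
  intro h; rw [h]; exact hg

lemma Mcnt_even (hmod : Fintype.card G % 4 = 2) (σ : Equiv.Perm G) : Mcnt σ % 2 = 0 := by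
  classical
  set s1 := univ.filter fun b : G => b ∈ VF G ∧ σ b ∉ VF G with hs1
  set s2 := univ.filter fun b : G => b ∉ VF G ∧ σ b ∈ VF G with hs2
  set s0 := univ.filter fun b : G => b ∈ VF G ∧ σ b ∈ VF G with hs0
  have a1 : s0.card + s1.card = (VF G).card := by
    have h := Finset.card_filter_add_card_filter_not
      (s := univ.filter fun b : G => b ∈ VF G) (p := fun b => σ b ∈ VF G)
    rw [Finset.filter_filter, Finset.filter_filter] at h
    have hVF : (univ.filter fun b : G => b ∈ VF G) = VF G := by ext g; simp
    rw [← hVF]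
    exact h
  have apre : (univ.filter fun b : G => σ b ∈ VF G).card = (VF G).card := by
    apply Finset.card_nbij' (i := fun b => σ b) (j := fun v => σ.symm v)
    · intro b hb; simpa using (mem_filter.1 hb).2
    · intro v hv; simp [Finset.mem_coe.1 hv]
    · intro b _; simp
    · intro v _; simp
  have a2 : s0.card + s2.card = (VF G).card := by
    have h := Finset.card_filter_add_card_filter_not
      (s := univ.filter fun b : G => σ b ∈ VF G) (p := fun b => b ∈ VF G)
    rw [Finset.filter_filter, Finset.filter_filter] at h
    rw [hs0, hs2]
    rw [← apre, ← h]
    congr 2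
    · ext g; simp only [mem_filter, mem_univ, true_and]; tauto
    · ext g; simp only [mem_filter, mem_univ, true_and]; tauto
  have a3 : Mcnt σ + (s1.card + s2.card) = Fintype.card G := by
    have h := Finset.card_filter_add_card_filter_not
      (s := (univ : Finset G)) (p := fun b => b + σ b ∈ VF G)
    rw [Finset.card_univ] at h
    have hneg : (univ.filter fun b : G => ¬(b + σ b ∈ VF G)) = s1 ∪ s2 := by
      ext b
      simp only [hs1, hs2, Finset.mem_union, mem_filter, mem_univ, true_and,
        add_mem_VF_iff hmod]
      tauto
    have hdisj : Disjoint s1 s2 := by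
      rw [Finset.disjoint_left]
      intro b hb1 hb2
      simp only [hs1, hs2, mem_filter, mem_univ, true_and] at hb1 hb2
      exact hb2.1 hb1.1
    rw [hneg, Finset.card_union_of_disjoint hdisj] at h
    exact h
  have heven : Fintype.card G % 2 = 0 := by omega
  have h12 : s1.card = s2.card := by omega
  omega

lemma core (hmod : Fintype.card G % 4 = 2) (w : Equiv.Perm G → ℤ)
    (hw : ∀ (c : G) (σ : Equiv.Perm G), w (Uc c σ) = w σ) (d : G →₀ ℕ) :
    (∑ σ ∈ univ.filter (fun σ : Equiv.Perm G => Dm σ = d), w σ * ((fixc σ : ℤ) - 1)) = 0 ↔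
    (∑ σ ∈ univ.filter (fun σ : Equiv.Perm G => Dm σ = d), w σ) = 0 := by
  classical
  set S := univ.filter (fun σ : Equiv.Perm G => Dm σ = d) with hS
  set F : ℤ := ∑ σ ∈ S, w σ * (fixc σ : ℤ) with hF
  set B : ℤ := ∑ σ ∈ S, w σ with hB
  set Md : ℕ := ∑ g ∈ VF G, d g with hMd
  obtain ⟨h, hn, hodd⟩ : ∃ h : ℕ, Fintype.card G = 2 * h ∧ h % 2 = 1 := by
    refine ⟨Fintype.card G / 2, by omega, by omega⟩
  -- key identity
  have key : (h : ℤ) * F = (Md : ℤ) * B := by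
    have big : (Fintype.card G : ℤ) * F = 2 * (Md : ℤ) * B := by
      have step1 : ∀ c : G, F = ∑ σ ∈ S, w σ * (fixc (Uc c σ) : ℤ) := by
        intro c
        rw [hF]
        refine Finset.sum_nbij' (i := Uc (-c)) (j := Uc c) ?_ ?_ ?_ ?_ ?_
        · intro σ hσ
          simp only [hS, mem_filter, mem_univ, true_and] at hσ ⊢
          rw [Dm_Uc, hσ]
        · intro σ hσ
          simp only [hS, mem_filter, mem_univ, true_and] at hσ ⊢
          rw [Dm_Uc, hσ]
        · intro σ _; exact Uc_Uc_neg c σ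
        · intro σ _; exact Uc_neg_Uc c σ
        · intro σ _
          rw [hw, Uc_Uc_neg]
      have : (Fintype.card G : ℤ) * F = ∑ c : G, ∑ σ ∈ S, w σ * (fixc (Uc c σ) : ℤ) := by
        calc (Fintype.card G : ℤ) * F = ∑ _c : G, F := by
              rw [Finset.sum_const, card_univ, nsmul_eq_mul]
          _ = ∑ c : G, ∑ σ ∈ S, w σ * (fixc (Uc c σ) : ℤ) :=
              Finset.sum_congr rfl fun c _ => step1 c
      rw [this, Finset.sum_comm]
      have inner : ∀ σ ∈ S, ∑ c : G, w σ * (fixc (Uc c σ) : ℤ) = 2 * (Md : ℤ) * w σ := by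
        intro σ hσ
        rw [← Finset.mul_sum]
        have : ∑ c : G, (fixc (Uc c σ) : ℤ) = 2 * (Md : ℤ) := by
          rw [← Nat.cast_sum]
          rw [sum_fixc_Uc hmod σ, Mcnt_eq_sum_Dm]
          simp only [hS, mem_filter, mem_univ, true_and] at hσ
          rw [hσ]
          push_cast [hMd]
          ring
        rw [this]; ring
      rw [Finset.sum_congr rfl inner, ← Finset.mul_sum, ← hB]
    rw [hn] at big
    push_cast at big
    have h2 : (2 : ℤ) * ((h : ℤ) * F) = 2 * ((Md : ℤ) * B) := by linarith
    exact mul_left_cancel₀ (by norm_num) h2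
  have hsplit : (∑ σ ∈ S, w σ * ((fixc σ : ℤ) - 1)) = F - B := by
    rw [hF, hB, ← Finset.sum_sub_distrib]
    refine Finset.sum_congr rfl fun σ _ => by ring
  rw [hsplit]
  constructor
  · intro hA
    by_contra hBne
    -- then F = B, so h * B = Md * B, so Md = h; but Md even, h odd
    have hFB : F = B := by linarith [sub_eq_zero.mp hA]
    rw [hFB] at key
    have hMh : (Md : ℤ) = (h : ℤ) := (mul_right_cancel₀ hBne key).symm
    -- get a permutation in S
    obtain ⟨σ₀, hσ₀, _⟩ := Finset.exists_ne_zero_of_sum_ne_zero hBne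
    have hMcnt : Mcnt σ₀ = Md := by
      rw [Mcnt_eq_sum_Dm]
      simp only [hS, mem_filter, mem_univ, true_and] at hσ₀
      rw [hσ₀]
    have heven := Mcnt_even hmod σ₀
    rw [hMcnt] at heven
    have : Md = h := by exact_mod_cast hMh
    omega
  · intro hB0
    rw [hB0, mul_zero] at key
    have hh : (h : ℤ) ≠ 0 := by
      have : h ≠ 0 := by omega
      exact_mod_cast this
    have hF0 : F = 0 := by
      rcases mul_eq_zero.mp key with h' | h'
      · exact absurd h' hh
      · exact h'
    rw [hB0, hF0, sub_zero]


lemma prodX {α : Type*} (s : Finset α) (f : α → G) :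
    (∏ a ∈ s, (X (f a) : MvPolynomial G ℤ)) =
      monomial (∑ a ∈ s, Finsupp.single (f a) 1) 1 := by
  classical
  induction s using Finset.cons_induction with
  | empty => simp
  | cons a s ha ih =>
    rw [Finset.prod_cons, Finset.sum_cons, ih, X, monomial_mul, one_mul]

lemma prodX_perm (σ : Equiv.Perm G) :
    (∏ a : G, (X (a + σ a) : MvPolynomial G ℤ)) = monomial (Dm σ) 1 :=
  prodX univ _

lemma coeff_big (v : Equiv.Perm G → ℤ) (d : G →₀ ℕ) :
    coeff d (∑ σ : Equiv.Perm G, (C (v σ) : MvPolynomial G ℤ) * ∏ a : G, X (a + σ a)) =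
      ∑ σ ∈ univ.filter (fun σ : Equiv.Perm G => Dm σ = d), v σ := by
  classical
  rw [coeff_sum]
  rw [Finset.sum_filter]
  refine Finset.sum_congr rfl fun σ _ => ?_
  rw [prodX_perm, C_mul_monomial, mul_one, coeff_monomial]

lemma support_eq_main (hmod : Fintype.card G % 4 = 2) (w : Equiv.Perm G → ℤ)
    (hw : ∀ (c : G) (σ : Equiv.Perm G), w (Uc c σ) = w σ) :
    (∑ σ : Equiv.Perm G,
        (C (w σ * ((fixc σ : ℤ) - 1)) : MvPolynomial G ℤ) * ∏ a : G, X (a + σ a)).support =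
      (∑ σ : Equiv.Perm G, (C (w σ) : MvPolynomial G ℤ) * ∏ a : G, X (a + σ a)).support := by
  ext d
  simp only [mem_support_iff, coeff_big]
  rw [not_iff_not.symm]
  simp only [not_not]
  exact core hmod w hw d

end Stmt12Aux

open Stmt12Aux in
/-- **Support equalities for `n ≡ 2 (mod 4)`.** If `|G| ≡ 2 (mod 4)`, then the monomial
support of `imm_{(n−1,1)}(M_G)` equals the support of `per(M_G)`, and the support of
`imm_{(2,1^{n−2})}(M_G)` equals the support of `det(M_G)`. -/
theorem stmt_12 {G : Type*} [AddCommGroup G] [Fintype G] [DecidableEq G]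
    (hmod : Fintype.card G % 4 = 2) :
    (∑ σ : Equiv.Perm G,
        (C (((Finset.univ.filter fun u : G => σ u = u).card : ℤ) - 1) : MvPolynomial G ℤ) *
          ∏ a : G, X (a + σ a)).support =
      (∑ σ : Equiv.Perm G, ∏ a : G, (X (a + σ a) : MvPolynomial G ℤ)).support ∧
    (∑ σ : Equiv.Perm G,
        (C ((Equiv.Perm.sign σ : ℤ) *
            (((Finset.univ.filter fun u : G => σ u = u).card : ℤ) - 1)) : MvPolynomial G ℤ) *
          ∏ a : G, X (a + σ a)).support =
      (Matrix.det (Matrix.of fun a b : G => (X (a + b) : MvPolynomial G ℤ))).support := by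
  constructor
  · have e1 : (∑ σ : Equiv.Perm G,
        (C (((Finset.univ.filter fun u : G => σ u = u).card : ℤ) - 1) : MvPolynomial G ℤ) *
          ∏ a : G, X (a + σ a))
        = ∑ σ : Equiv.Perm G,
            (C ((1:ℤ) * ((fixc σ : ℤ) - 1)) : MvPolynomial G ℤ) * ∏ a : G, X (a + σ a) := by
      refine Finset.sum_congr rfl fun σ _ => ?_
      rw [one_mul]
      rfl
    have e2 : (∑ σ : Equiv.Perm G, ∏ a : G, (X (a + σ a) : MvPolynomial G ℤ))
        = ∑ σ : Equiv.Perm G, (C (1:ℤ) : MvPolynomial G ℤ) * ∏ a : G, X (a + σ a) := by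
      refine Finset.sum_congr rfl fun σ _ => ?_
      rw [C_1, one_mul]
    rw [e1, e2]
    exact support_eq_main hmod (fun _ => (1:ℤ)) (fun c σ => rfl)
  · have e1 : (∑ σ : Equiv.Perm G,
        (C ((Equiv.Perm.sign σ : ℤ) *
            (((Finset.univ.filter fun u : G => σ u = u).card : ℤ) - 1)) : MvPolynomial G ℤ) *
          ∏ a : G, X (a + σ a))
        = ∑ σ : Equiv.Perm G,
            (C ((Equiv.Perm.sign σ : ℤ) * ((fixc σ : ℤ) - 1)) : MvPolynomial G ℤ) *
              ∏ a : G, X (a + σ a) := rfl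
    have e2 : Matrix.det (Matrix.of fun a b : G => (X (a + b) : MvPolynomial G ℤ))
        = ∑ σ : Equiv.Perm G,
            (C ((Equiv.Perm.sign σ : ℤ)) : MvPolynomial G ℤ) * ∏ a : G, X (a + σ a) := by
      rw [Matrix.det_apply]
      refine Finset.sum_congr rfl fun σ _ => ?_
      rw [Units.smul_def, smul_eq_C_mul]
      congr 1
      refine Finset.prod_congr rfl fun i _ => ?_
      rw [Matrix.of_apply, add_comm]
    rw [e1, e2]
    exact support_eq_main hmod (fun σ => (Equiv.Perm.sign σ : ℤ))
      (fun c σ => by beta_reduce; rw [sign_Uc])
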